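/- arXiv:2309.03534 — 3 statements merged into one kernel-verified Lean document; each statement's English description precedes it below -/
import Mathlib

section
/- Let ρ₊, ρ₋ > 0 and let h₊, h₋, w be vectors in ℝ³ such that h₊ × h₋ ≠ 0 and w lies in the plane P spanned by h₊ and h₋. Assume the strict Syrovatskij condition (ρ₊ + ρ₋)·‖h₊ × h₋‖² > ρ₊·‖h₊ × w‖² + ρ₋·‖h₋ × w‖². Then for every nonzero vector a ∈ P, one has (ρ₊/(ρ₊+ρ₋))·(a·h₊)² + (ρ₋/(ρ₊+ρ₋))·(a·h₋)² − (ρ₊·ρ₋/(ρ₊+ρ₋)²)·(a·w)² > 0. -/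
open scoped RealInnerProductSpace

/-- Cross product on `EuclideanSpace ℝ (Fin 3)`. -/
noncomputable def cross3 (a b : EuclideanSpace ℝ (Fin 3)) : EuclideanSpace ℝ (Fin 3) :=
  (WithLp.equiv 2 (Fin 3 → ℝ)).symm
    (crossProduct ((WithLp.equiv 2 (Fin 3 → ℝ)) a) ((WithLp.equiv 2 (Fin 3 → ℝ)) b))

lemma cross3_right (u v₁ v₂ : EuclideanSpace ℝ (Fin 3)) (c₁ c₂ : ℝ) :
    cross3 u (c₁ • v₁ + c₂ • v₂) = c₁ • cross3 u v₁ + c₂ • cross3 u v₂ := by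
  simp [cross3, map_add, map_smul]

lemma cross3_self (u : EuclideanSpace ℝ (Fin 3)) : cross3 u u = 0 := by
  simp [cross3, cross_self]

lemma cross3_anticomm (u v : EuclideanSpace ℝ (Fin 3)) : cross3 u v = -cross3 v u := by
  unfold cross3
  rw [← cross_anticomm]
  rfl

/-- Under the strict Syrovatskij condition, the stabilizing quadratic form is strictly
positive on every nonzero vector of the plane spanned by `h₊` and `h₋`. -/
theorem stmt5 (ρp ρm : ℝ) (hρp : 0 < ρp) (hρm : 0 < ρm)
    (hplus hminus w : EuclideanSpace ℝ (Fin 3))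
    (hcross : cross3 hplus hminus ≠ 0)
    (hwspan : w ∈ Submodule.span ℝ {hplus, hminus})
    (hsyro : (ρp + ρm) * ‖cross3 hplus hminus‖ ^ 2 >
        ρp * ‖cross3 hplus w‖ ^ 2 + ρm * ‖cross3 hminus w‖ ^ 2) :
    ∀ a ∈ Submodule.span ℝ {hplus, hminus}, a ≠ 0 →
      0 < ρp / (ρp + ρm) * (inner ℝ a hplus : ℝ) ^ 2 + ρm / (ρp + ρm) * (inner ℝ a hminus : ℝ) ^ 2
          - ρp * ρm / (ρp + ρm) ^ 2 * (inner ℝ a w : ℝ) ^ 2 := by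
  intro a ha ha0
  obtain ⟨cp, cm, hw⟩ := Submodule.mem_span_pair.mp hwspan
  obtain ⟨α, β, haeq⟩ := Submodule.mem_span_pair.mp ha
  set x : ℝ := inner ℝ a hplus with hx
  set y : ℝ := inner ℝ a hminus with hy
  set N : ℝ := ‖cross3 hplus hminus‖ ^ 2 with hN
  have hNpos : 0 < N := pow_pos (norm_pos_iff.mpr hcross) 2
  -- cross products with w
  have hc1 : ‖cross3 hplus w‖ ^ 2 = cm ^ 2 * N := by
    have h1 : cross3 hplus w = cm • cross3 hplus hminus := by
      rw [← hw, cross3_right, cross3_self]; simp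
    rw [h1, norm_smul, Real.norm_eq_abs, mul_pow, sq_abs, ← hN]
  have hc2 : ‖cross3 hminus w‖ ^ 2 = cp ^ 2 * N := by
    have h2 : cross3 hminus w = (-cp) • cross3 hplus hminus := by
      rw [← hw, cross3_right, cross3_self, cross3_anticomm hminus hplus]
      simp
    rw [h2, norm_smul, Real.norm_eq_abs, abs_neg, mul_pow, sq_abs, ← hN]
  -- Syrovatskij condition in coordinates
  have hcond : ρp * cm ^ 2 + ρm * cp ^ 2 < ρp + ρm := by
    rw [hc1, hc2] at hsyro
    nlinarith [hNpos]
  -- inner products in coordinates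
  have hz : (inner ℝ a w : ℝ) = cp * x + cm * y := by
    rw [← hw, inner_add_right, real_inner_smul_right, real_inner_smul_right]
  -- x, y not both zero
  have hxy : x ≠ 0 ∨ y ≠ 0 := by
    by_contra h
    push_neg at h
    apply ha0
    rw [← inner_self_eq_zero (𝕜 := ℝ) (x := a)]
    have h5 : (inner ℝ a a : ℝ) = α * x + β * y := by
      nth_rewrite 1 [← haeq]
      rw [inner_add_left, real_inner_smul_left, real_inner_smul_left, hx, hy,
        real_inner_comm a hplus, real_inner_comm a hminus]
    rw [h5, h.1, h.2]; ring
  have hB : 0 < ρp * x ^ 2 + ρm * y ^ 2 := by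
    rcases hxy with h | h
    · have hx2 : 0 < x ^ 2 := by positivity
      nlinarith [sq_nonneg y]
    · have hy2 : 0 < y ^ 2 := by positivity
      nlinarith [sq_nonneg x]
  have key : 0 < (ρp + ρm) * (ρp * x ^ 2 + ρm * y ^ 2) - ρp * ρm * (cp * x + cm * y) ^ 2 := by
    nlinarith [mul_pos (sub_pos.mpr hcond) hB, sq_nonneg (ρm * cp * y - ρp * cm * x)]
  rw [hz]
  have heq : ρp / (ρp + ρm) * x ^ 2 + ρm / (ρp + ρm) * y ^ 2
      - ρp * ρm / (ρp + ρm) ^ 2 * (cp * x + cm * y) ^ 2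
      = ((ρp + ρm) * (ρp * x ^ 2 + ρm * y ^ 2) - ρp * ρm * (cp * x + cm * y) ^ 2) / (ρp + ρm) ^ 2 := by
    have hS : (0:ℝ) < ρp + ρm := by linarith
    field_simp
  rw [heq]
  exact div_pos key (by positivity)
end

section
/- Let p, q > 0 with p + q = 1, let a, b ∈ ℝ² be linearly independent, and let w = w⁺·a + w⁻·b ∈ ℝ² with p·(w⁻)² + q·(w⁺)² < 1. Then the symmetric 2×2 matrix M := p·(a aᵀ) + q·(b bᵀ) − p·q·(w wᵀ) is positive definite. -/
open Matrix

/-- Matrix form of the stabilizing quadratic form: `p a aᵀ + q b bᵀ − p q w wᵀ` is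
positive definite when `p, q > 0`, `p + q = 1`, `a, b` are linearly independent and
`w = w⁺ a + w⁻ b` with `p (w⁻)² + q (w⁺)² < 1`. -/
theorem stmt6 (p q : ℝ) (hp : 0 < p) (hq : 0 < q) (hpq : p + q = 1)
    (a b : Fin 2 → ℝ) (hab : LinearIndependent ℝ ![a, b])
    (wp wm : ℝ) (w : Fin 2 → ℝ) (hw : w = wp • a + wm • b)
    (hsmall : p * wm ^ 2 + q * wp ^ 2 < 1) :
    (p • Matrix.vecMulVec a a + q • Matrix.vecMulVec b b
      - (p * q) • Matrix.vecMulVec w w).PosDef := by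
  rw [Matrix.posDef_iff_dotProduct_mulVec]
  constructor
  · ext i j
    simp [Matrix.vecMulVec, Matrix.conjTranspose_apply]
    ring
  · intro x hx
    set u := x ⬝ᵥ a with hu
    set v := x ⬝ᵥ b with hv
    have hspan : Submodule.span ℝ (Set.range ![a, b]) = ⊤ :=
      hab.span_eq_top_of_card_eq_finrank (by simp)
    have hnz : u ≠ 0 ∨ v ≠ 0 := by
      by_contra h
      push_neg at h
      obtain ⟨h1, h2⟩ := h
      have hmem : x ∈ Submodule.span ℝ (Set.range ![a, b]) := hspan ▸ Submodule.mem_top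
      rw [show Set.range ![a, b] = {a, b} by
          simp [Matrix.range_cons, Matrix.range_empty, Set.pair_comm],
        Submodule.mem_span_pair] at hmem
      obtain ⟨c, d, hcd⟩ := hmem
      have hxx : x ⬝ᵥ x = 0 := by
        have h3 : x ⬝ᵥ (c • a + d • b) = 0 := by
          rw [dotProduct_add, dotProduct_smul, dotProduct_smul, ← hu, ← hv,
            h1, h2]
          simp
        rw [hcd] at h3
        exact h3
      exact hx (dotProduct_self_eq_zero.mp hxx)
    have key : x ⬝ᵥ ((p • Matrix.vecMulVec a a + q • Matrix.vecMulVec b b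
      - (p * q) • Matrix.vecMulVec w w) *ᵥ x)
        = p * u ^ 2 + q * v ^ 2 - p * q * (wp * u + wm * v) ^ 2 := by
      subst hw
      simp [Matrix.vecMulVec, Matrix.mulVec, dotProduct, Fin.sum_univ_two, hu, hv,
        Pi.add_apply, Pi.smul_apply]
      ring
    have hform : 0 < p * u ^ 2 + q * v ^ 2 - p * q * (wp * u + wm * v) ^ 2 := by
      have hs : (0:ℝ) < 1 - (p * wm ^ 2 + q * wp ^ 2) := by linarith
      have hpuv : 0 < p * u ^ 2 + q * v ^ 2 := by
        rcases hnz with h | h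
        · have hu2 : 0 < u ^ 2 := lt_of_le_of_ne (sq_nonneg u) (Ne.symm (pow_ne_zero 2 h))
          nlinarith [sq_nonneg v]
        · have hv2 : 0 < v ^ 2 := lt_of_le_of_ne (sq_nonneg v) (Ne.symm (pow_ne_zero 2 h))
          nlinarith [sq_nonneg u]
      have expand : p * u ^ 2 + q * v ^ 2 - p * q * (wp * u + wm * v) ^ 2
          = (1 - (p * wm ^ 2 + q * wp ^ 2)) * (p * u ^ 2 + q * v ^ 2)
            + (p * wm * u - q * wp * v) ^ 2 := by ring
      rw [expand]
      have := mul_pos hs hpuv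
      nlinarith [sq_nonneg (p * wm * u - q * wp * v)]
    rw [star_trivial, key]; exact hform
end

section
/- Let ρ₊, ρ₋ > 0 and let h₊, h₋, w ∈ ℝ³ be such that h₊ × h₋ ≠ 0 and w lies in the span of h₊ and h₋. Assume the strict Syrovatskij condition (ρ₊ + ρ₋)·‖h₊ × h₋‖² > ρ₊·‖h₊ × w‖² + ρ₋·‖h₋ × w‖². Then ρ₊·‖h₊‖² + ρ₋·‖h₋‖² > (ρ₊·ρ₋/(ρ₊+ρ₋))·‖w‖². -/
lemma cross3_left_combo (a b : EuclideanSpace ℝ (Fin 3)) (α β : ℝ) :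
    cross3 a (α • a + β • b) = β • cross3 a b := by
  simp [cross3, map_add, map_smul, cross_self]

lemma cross3_right_combo (a b : EuclideanSpace ℝ (Fin 3)) (α β : ℝ) :
    cross3 b (α • a + β • b) = (-α) • cross3 a b := by
  simp only [cross3, WithLp.equiv_apply, WithLp.ofLp_add, WithLp.ofLp_smul, map_add, map_smul, cross_self,
    smul_zero, add_zero, LinearMap.add_apply, LinearMap.smul_apply]
  conv_lhs => rw [← cross_anticomm]
  simp [-cross_anticomm, -cross_anticomm']

lemma cross3_zero_left (a b : EuclideanSpace ℝ (Fin 3)) (h : a = 0) : cross3 a b = 0 := by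
  simp [cross3, h]

lemma cross3_zero_right (a b : EuclideanSpace ℝ (Fin 3)) (h : b = 0) : cross3 a b = 0 := by
  simp [cross3, h]

/-- The strict (second) Syrovatskij condition implies the first Syrovatskij condition:
`ρ₊ |h₊|² + ρ₋ |h₋|² > (ρ₊ ρ₋ / (ρ₊ + ρ₋)) |w|²`. -/
theorem stmt15 (ρp ρm : ℝ) (hρp : 0 < ρp) (hρm : 0 < ρm)
    (hplus hminus w : EuclideanSpace ℝ (Fin 3))
    (hcross : cross3 hplus hminus ≠ 0)
    (hwspan : w ∈ Submodule.span ℝ {hplus, hminus})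
    (hsyro : (ρp + ρm) * ‖cross3 hplus hminus‖ ^ 2 >
        ρp * ‖cross3 hplus w‖ ^ 2 + ρm * ‖cross3 hminus w‖ ^ 2) :
    ρp * ‖hplus‖ ^ 2 + ρm * ‖hminus‖ ^ 2 > ρp * ρm / (ρp + ρm) * ‖w‖ ^ 2 := by
  obtain ⟨α, β, rfl⟩ := Submodule.mem_span_pair.mp hwspan
  set A := ‖hplus‖ with hA_def
  set B := ‖hminus‖ with hB_def
  have hA : 0 < A := by
    rw [hA_def, norm_pos_iff]
    intro h
    exact hcross (cross3_zero_left _ _ h)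
  have hB : 0 < B := by
    rw [hB_def, norm_pos_iff]
    intro h
    exact hcross (cross3_zero_right _ _ h)
  have hD : 0 < ‖cross3 hplus hminus‖ := norm_pos_iff.mpr hcross
  -- reduce the Syrovatskij condition
  rw [cross3_left_combo, cross3_right_combo, norm_smul, norm_smul] at hsyro
  have hkey : ρp * β ^ 2 + ρm * α ^ 2 < ρp + ρm := by
    have h2 : (ρp * β ^ 2 + ρm * α ^ 2) * ‖cross3 hplus hminus‖ ^ 2 <
        (ρp + ρm) * ‖cross3 hplus hminus‖ ^ 2 := by
      calc (ρp * β ^ 2 + ρm * α ^ 2) * ‖cross3 hplus hminus‖ ^ 2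
          = ρp * (‖β‖ * ‖cross3 hplus hminus‖) ^ 2
            + ρm * (‖(-α : ℝ)‖ * ‖cross3 hplus hminus‖) ^ 2 := by
            simp [Real.norm_eq_abs, mul_pow, sq_abs]; ring
        _ < (ρp + ρm) * ‖cross3 hplus hminus‖ ^ 2 := hsyro
    exact lt_of_mul_lt_mul_right h2 (by positivity)
  -- Cauchy–Schwarz
  have hC : |inner ℝ hplus hminus| ≤ A * B := abs_real_inner_le_norm hplus hminus
  set C : ℝ := inner ℝ hplus hminus with hC_def
  have hCu : C ≤ A * B := (abs_le.mp hC).2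
  have hCl : -(A * B) ≤ C := (abs_le.mp hC).1
  -- expand the norm of w
  have hw : ‖α • hplus + β • hminus‖ ^ 2
      = α ^ 2 * A ^ 2 + 2 * α * β * C + β ^ 2 * B ^ 2 := by
    rw [← real_inner_self_eq_norm_sq]
    simp only [inner_add_left, inner_add_right, real_inner_smul_left, real_inner_smul_right]
    rw [real_inner_self_eq_norm_sq hplus, real_inner_self_eq_norm_sq hminus,
      real_inner_comm hplus hminus, ← hC_def, ← hA_def, ← hB_def]
    ring
  -- cross term bound
  have hmix : 2 * ρp * ρm * α * β * C ≤ ρp ^ 2 * β ^ 2 * A ^ 2 + ρm ^ 2 * α ^ 2 * B ^ 2 := by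
    rcases le_or_gt 0 (α * β) with h | h
    · nlinarith [sq_nonneg (ρp * β * A - ρm * α * B),
        mul_nonneg (mul_nonneg (mul_pos hρp hρm).le h) (sub_nonneg.mpr hCu)]
    · nlinarith [sq_nonneg (ρp * β * A + ρm * α * B),
        mul_nonneg (mul_nonneg (mul_pos hρp hρm).le (neg_nonneg.mpr h.le))
          (sub_nonneg.mpr (neg_le.mp (neg_le.mpr hCl)))]
  rw [gt_iff_lt, hw, div_mul_eq_mul_div, div_lt_iff₀ (by positivity)]
  nlinarith [mul_pos (sub_pos.mpr hkey)
      (show 0 < ρp * A ^ 2 + ρm * B ^ 2 by positivity), hmix]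
end
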